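/- Let H ∈ (1/2,1). For all 0 < s < t the quantity φ(s,t) := (1/2)(t^{2H} − s^{2H} − (t−s)^{2H}) satisfies φ(s,t) > 0, and there is a constant C_H depending only on H such that φ(s,t) ≤ C_H min{ s t^{2H−1}, (t−s) t^{2H−1}, s^H (t−s)^H }. -/

import Mathlib

open Real Set

noncomputable section

/-- `φ(s,t) = (1/2)(t^{2H} − s^{2H} − (t−s)^{2H})`. -/
def phiFn (H s t : ℝ) : ℝ := (t ^ (2*H) - s ^ (2*H) - (t - s) ^ (2*H)) / 2

end

/-- MVT-type bound: `t^α − r^α ≤ α (t − r) t^{α−1}` for `0 ≤ r ≤ t`, `α ≥ 1`. -/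
lemma aux_mvt (α t r : ℝ) (hα : 1 ≤ α) (hr : 0 ≤ r) (hrt : r ≤ t) (ht : 0 < t) :
    t ^ α - r ^ α ≤ α * (t - r) * t ^ (α - 1) := by
  have hdiv : -1 ≤ r / t - 1 := by
    have : 0 ≤ r / t := div_nonneg hr ht.le
    linarith
  have hb := one_add_mul_self_le_rpow_one_add hdiv hα
  have h1 : (1 : ℝ) + (r / t - 1) = r / t := by ring
  rw [h1] at hb
  -- hb : 1 + α * (r/t - 1) ≤ (r/t) ^ α
  have hrt' : (r / t) ^ α = r ^ α / t ^ α := Real.div_rpow hr ht.le α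
  rw [hrt'] at hb
  have htα : (0 : ℝ) < t ^ α := Real.rpow_pos_of_pos ht α
  have key : t ^ α * (1 + α * (r / t - 1)) ≤ r ^ α := by
    calc t ^ α * (1 + α * (r / t - 1)) ≤ t ^ α * (r ^ α / t ^ α) := by
          exact mul_le_mul_of_nonneg_left hb htα.le
      _ = r ^ α := by field_simp
  have ht1 : t ^ α = t * t ^ (α - 1) := by
    rw [← Real.rpow_one_add' ht.le (by intro h; nlinarith)]
    ring_nf
  have ht2 : t ^ α * (r / t) = r * t ^ (α - 1) := by
    rw [ht1]; field_simp
  nlinarith [key, ht1, ht2]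

/-- Mixed bound: `u * v^(2H−1) ≤ u^H * v^H` for `0 < u ≤ v`, `1/2 < H < 1`. -/
lemma aux_mix (H u v : ℝ) (hH : H ∈ Set.Ioo (1/2 : ℝ) 1)
    (hu : 0 < u) (huv : u ≤ v) : u * v ^ (2*H-1) ≤ u ^ H * v ^ H := by
  obtain ⟨hH1, hH2⟩ := hH
  have hv : 0 < v := lt_of_lt_of_le hu huv
  have hu1 : u = u ^ H * u ^ (1 - H) := by
    rw [← Real.rpow_add hu]; ring_nf; exact (Real.rpow_one u).symm
  have hv1 : v ^ (2*H-1) = v ^ H / v ^ (1 - H) := by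
    rw [← Real.rpow_sub hv]; ring_nf
  have hle : u ^ (1 - H) ≤ v ^ (1 - H) :=
    Real.rpow_le_rpow hu.le huv (by linarith)
  have hvp : (0 : ℝ) < v ^ (1 - H) := Real.rpow_pos_of_pos hv _
  have hup : (0 : ℝ) < u ^ H := Real.rpow_pos_of_pos hu _
  have hvHp : (0 : ℝ) < v ^ H := Real.rpow_pos_of_pos hv _
  calc u * v ^ (2*H-1) = u ^ H * v ^ H * (u ^ (1 - H) / v ^ (1 - H)) := by
        rw [hv1]; nth_rewrite 1 [hu1]; field_simp
    _ ≤ u ^ H * v ^ H * 1 := by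
        apply mul_le_mul_of_nonneg_left _ (by positivity)
        exact (div_le_one hvp).mpr hle
    _ = u ^ H * v ^ H := by ring

/-- For `H ∈ (1/2,1)` and all `0 < s < t`, `φ(s,t) > 0`, and there is a
constant `C_H` with `φ(s,t) ≤ C_H min{s t^{2H−1}, (t−s) t^{2H−1}, s^H (t−s)^H}`. -/
theorem statement17 (H : ℝ) (hH : H ∈ Set.Ioo (1/2 : ℝ) 1) :
    (∀ s t : ℝ, 0 < s → s < t → 0 < phiFn H s t) ∧
    ∃ C : ℝ, 0 < C ∧ ∀ s t : ℝ, 0 < s → s < t →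
      phiFn H s t ≤ C * min (min (s * t ^ (2*H-1)) ((t-s) * t ^ (2*H-1)))
        (s ^ H * (t-s) ^ H) := by
  obtain ⟨hH1, hH2⟩ := hH
  have hα1 : (1 : ℝ) ≤ 2 * H := by linarith
  constructor
  · -- positivity
    intro s t hs hst
    have ht : 0 < t := hs.trans hst
    have hts : 0 < t - s := sub_pos.mpr hst
    have ht1 : t ^ (2*H) = t * t ^ (2*H - 1) := by
      rw [← Real.rpow_one_add' ht.le (by intro h; nlinarith)]
      ring_nf
    have hs1 : s ^ (2*H) = s * s ^ (2*H - 1) := by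
      rw [← Real.rpow_one_add' hs.le (by intro h; nlinarith)]
      ring_nf
    have hts1 : (t - s) ^ (2*H) = (t - s) * (t - s) ^ (2*H - 1) := by
      rw [← Real.rpow_one_add' hts.le (by intro h; nlinarith)]
      ring_nf
    have h2 : s ^ (2*H - 1) < t ^ (2*H - 1) :=
      Real.rpow_lt_rpow hs.le hst (by linarith)
    have h3 : (t - s) ^ (2*H - 1) < t ^ (2*H - 1) :=
      Real.rpow_lt_rpow hts.le (by linarith) (by linarith)
    have hkey : s ^ (2*H) + (t - s) ^ (2*H) < t ^ (2*H) := by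
      rw [ht1, hs1, hts1]
      have e1 : s * s ^ (2*H-1) < s * t ^ (2*H-1) :=
        mul_lt_mul_of_pos_left h2 hs
      have e2 : (t - s) * (t - s) ^ (2*H-1) < (t - s) * t ^ (2*H-1) :=
        mul_lt_mul_of_pos_left h3 hts
      nlinarith
    unfold phiFn
    linarith
  · refine ⟨2, by norm_num, fun s t hs hst => ?_⟩
    have ht : 0 < t := hs.trans hst
    have hts : 0 < t - s := sub_pos.mpr hst
    have htp : (0 : ℝ) < t ^ (2*H-1) := Real.rpow_pos_of_pos ht _
    have hsp : (0 : ℝ) < s ^ (2*H) := Real.rpow_pos_of_pos hs _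
    have htsp : (0 : ℝ) < (t - s) ^ (2*H) := Real.rpow_pos_of_pos hts _
    -- bound (i): φ ≤ H s t^{2H-1}
    have hi : phiFn H s t ≤ H * (s * t ^ (2*H-1)) := by
      have := aux_mvt (2*H) t (t - s) hα1 hts.le (by linarith) ht
      unfold phiFn
      nlinarith
    -- bound (ii): φ ≤ H (t-s) t^{2H-1}
    have hii : phiFn H s t ≤ H * ((t - s) * t ^ (2*H-1)) := by
      have := aux_mvt (2*H) t s hα1 hs.le hst.le ht
      unfold phiFn
      nlinarith
    -- bound (iii): φ ≤ 2 (s^H (t-s)^H)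
    have hiii : phiFn H s t ≤ 2 * (s ^ H * (t - s) ^ H) := by
      have h2pow : ((2:ℝ)) ^ (2*H-1) ≤ 2 := by
        calc ((2:ℝ)) ^ (2*H-1) ≤ (2:ℝ) ^ (1:ℝ) :=
              Real.rpow_le_rpow_of_exponent_le (by norm_num) (by linarith)
          _ = 2 := Real.rpow_one 2
      rcases le_total s (t - s) with hcase | hcase
      · -- s ≤ t - s : t ≤ 2(t-s)
        have htle : t ≤ 2 * (t - s) := by linarith
        have h1 : t ^ (2*H-1) ≤ 2 * (t - s) ^ (2*H-1) := by
          calc t ^ (2*H-1) ≤ (2 * (t - s)) ^ (2*H-1) :=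
                Real.rpow_le_rpow ht.le htle (by linarith)
            _ = (2:ℝ) ^ (2*H-1) * (t - s) ^ (2*H-1) :=
                Real.mul_rpow (by norm_num) hts.le
            _ ≤ 2 * (t - s) ^ (2*H-1) := by
                apply mul_le_mul_of_nonneg_right h2pow
                  (Real.rpow_pos_of_pos hts _).le
        have h2 : s * (t - s) ^ (2*H-1) ≤ s ^ H * (t - s) ^ H :=
          aux_mix H s (t - s) ⟨hH1, hH2⟩ hs hcase
        calc phiFn H s t ≤ H * (s * t ^ (2*H-1)) := hi
          _ ≤ H * (s * (2 * (t - s) ^ (2*H-1))) := by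
              apply mul_le_mul_of_nonneg_left _ (by linarith)
              exact mul_le_mul_of_nonneg_left h1 hs.le
          _ = 2 * H * (s * (t - s) ^ (2*H-1)) := by ring
          _ ≤ 2 * H * (s ^ H * (t - s) ^ H) := by
              apply mul_le_mul_of_nonneg_left h2 (by linarith)
          _ ≤ 2 * (s ^ H * (t - s) ^ H) := by
              have : (0:ℝ) ≤ s ^ H * (t - s) ^ H := by positivity
              nlinarith
      · -- t - s ≤ s : t ≤ 2s
        have htle : t ≤ 2 * s := by linarith
        have h1 : t ^ (2*H-1) ≤ 2 * s ^ (2*H-1) := by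
          calc t ^ (2*H-1) ≤ (2 * s) ^ (2*H-1) :=
                Real.rpow_le_rpow ht.le htle (by linarith)
            _ = (2:ℝ) ^ (2*H-1) * s ^ (2*H-1) :=
                Real.mul_rpow (by norm_num) hs.le
            _ ≤ 2 * s ^ (2*H-1) := by
                apply mul_le_mul_of_nonneg_right h2pow
                  (Real.rpow_pos_of_pos hs _).le
        have h2 : (t - s) * s ^ (2*H-1) ≤ (t - s) ^ H * s ^ H :=
          aux_mix H (t - s) s ⟨hH1, hH2⟩ hts hcase
        calc phiFn H s t ≤ H * ((t - s) * t ^ (2*H-1)) := hii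
          _ ≤ H * ((t - s) * (2 * s ^ (2*H-1))) := by
              apply mul_le_mul_of_nonneg_left _ (by linarith)
              exact mul_le_mul_of_nonneg_left h1 hts.le
          _ = 2 * H * ((t - s) * s ^ (2*H-1)) := by ring
          _ ≤ 2 * H * ((t - s) ^ H * s ^ H) := by
              apply mul_le_mul_of_nonneg_left h2 (by linarith)
          _ ≤ 2 * (s ^ H * (t - s) ^ H) := by
              have : (0:ℝ) ≤ (t - s) ^ H * s ^ H := by positivity
              nlinarith [mul_comm ((t-s) ^ H) (s ^ H)]
    have hmin : 2 * min (min (s * t ^ (2*H-1)) ((t-s) * t ^ (2*H-1)))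
        (s ^ H * (t-s) ^ H)
        = min (min (2 * (s * t ^ (2*H-1))) (2 * ((t-s) * t ^ (2*H-1))))
          (2 * (s ^ H * (t-s) ^ H)) := by
      rw [mul_min_of_nonneg _ _ (by norm_num : (0:ℝ) ≤ 2),
        mul_min_of_nonneg _ _ (by norm_num : (0:ℝ) ≤ 2)]
    rw [hmin]
    refine le_min (le_min ?_ ?_) hiii
    · calc phiFn H s t ≤ H * (s * t ^ (2*H-1)) := hi
        _ ≤ 2 * (s * t ^ (2*H-1)) := by
            have : (0:ℝ) < s * t ^ (2*H-1) := by positivity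
            nlinarith
    · calc phiFn H s t ≤ H * ((t-s) * t ^ (2*H-1)) := hii
        _ ≤ 2 * ((t-s) * t ^ (2*H-1)) := by
            have : (0:ℝ) < (t-s) * t ^ (2*H-1) := by positivity
            nlinarith
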